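/- Variant of the Davis–Kahan sin θ theorem: Let A and Â be symmetric d×d real matrices, let λ_i denote the i-th largest eigenvalue of A, and for a positive integer k < d assume λ_k > λ_{k+1}. Let θ be the maximum principal angle between the subspaces spanned by the top-k eigenvectors of A and of Â. Then sin θ ≤ 2‖A − Â‖ / (λ_k − λ_{k+1}), where ‖·‖ is the spectral norm. -/

import Mathlib

open Matrix

/-- The spectral norm (ℓ²→ℓ² operator norm) of a real matrix. -/
noncomputable def specNorm {d₁ d₂ : ℕ} (A : Matrix (Fin d₁) (Fin d₂) ℝ) : ℝ :=
  ‖LinearMap.toContinuousLinearMap (Matrix.toEuclideanLin A)‖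

namespace DKaux

variable {d : ℕ}

lemma specNorm_eq_clm (M : Matrix (Fin d) (Fin d) ℝ) :
    specNorm M = ‖Matrix.toEuclideanCLM (𝕜 := ℝ) M‖ := rfl

lemma ct_eq_t (M : Matrix (Fin d) (Fin d) ℝ) : Mᴴ = Mᵀ := by
  ext i j; simp [Matrix.conjTranspose_apply]

lemma specNorm_transpose (M : Matrix (Fin d) (Fin d) ℝ) : specNorm Mᵀ = specNorm M := by
  rw [specNorm_eq_clm, specNorm_eq_clm, ← ct_eq_t, ← Matrix.star_eq_conjTranspose, map_star,
    ContinuousLinearMap.star_eq_adjoint]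
  exact LinearIsometryEquiv.norm_map _ _

lemma specNorm_mul_le (M N : Matrix (Fin d) (Fin d) ℝ) :
    specNorm (M * N) ≤ specNorm M * specNorm N := by
  rw [specNorm_eq_clm, specNorm_eq_clm, specNorm_eq_clm, _root_.map_mul]
  exact norm_mul_le _ _

lemma specNorm_star_self (M : Matrix (Fin d) (Fin d) ℝ) : specNorm (Mᵀ * M) = specNorm M ^ 2 := by
  rw [specNorm_eq_clm, specNorm_eq_clm, _root_.map_mul, ← ct_eq_t,
    ← Matrix.star_eq_conjTranspose, map_star, ContinuousLinearMap.star_eq_adjoint,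
    ContinuousLinearMap.mul_def]
  rw [ContinuousLinearMap.norm_adjoint_comp_self, sq]

lemma specNorm_neg (M : Matrix (Fin d) (Fin d) ℝ) : specNorm (-M) = specNorm M := by
  rw [specNorm_eq_clm, specNorm_eq_clm, map_neg, norm_neg]

lemma specNorm_nonneg (M : Matrix (Fin d) (Fin d) ℝ) : 0 ≤ specNorm M := norm_nonneg _

lemma clm_apply (M : Matrix (Fin d) (Fin d) ℝ) (x : Fin d → ℝ) :
    (Matrix.toEuclideanCLM (𝕜 := ℝ) M) ((WithLp.equiv 2 _).symm x)
      = (WithLp.equiv 2 _).symm (M *ᵥ x) := by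
  exact Matrix.toEuclideanCLM_toLp M x

lemma dot_self_nonneg (v : Fin d → ℝ) : 0 ≤ v ⬝ᵥ v :=
  Finset.sum_nonneg fun i _ => mul_self_nonneg _

lemma euc_norm (x : Fin d → ℝ) :
    ‖(WithLp.equiv 2 ((_ : Fin d) → ℝ)).symm x‖ = Real.sqrt (x ⬝ᵥ x) := by
  rw [EuclideanSpace.norm_eq]
  congr 1
  simp [dotProduct, sq]

lemma euc_inner (u v : Fin d → ℝ) :
    (inner ℝ ((WithLp.equiv 2 ((_ : Fin d) → ℝ)).symm u)
      ((WithLp.equiv 2 ((_ : Fin d) → ℝ)).symm v) : ℝ) = u ⬝ᵥ v := by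
  rw [PiLp.inner_apply]
  simp [dotProduct, mul_comm]

/-- B2 -/
lemma dot_mulVec_le (M : Matrix (Fin d) (Fin d) ℝ) (u v : Fin d → ℝ) :
    |u ⬝ᵥ (M *ᵥ v)| ≤ specNorm M * (Real.sqrt (u ⬝ᵥ u) * Real.sqrt (v ⬝ᵥ v)) := by
  have h := abs_real_inner_le_norm ((WithLp.equiv 2 ((_ : Fin d) → ℝ)).symm u)
    ((Matrix.toEuclideanCLM (𝕜 := ℝ) M) ((WithLp.equiv 2 ((_ : Fin d) → ℝ)).symm v))
  have hb : ‖(Matrix.toEuclideanCLM (𝕜 := ℝ) M) ((WithLp.equiv 2 ((_ : Fin d) → ℝ)).symm v)‖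
      ≤ specNorm M * Real.sqrt (v ⬝ᵥ v) := by
    calc ‖(Matrix.toEuclideanCLM (𝕜 := ℝ) M) ((WithLp.equiv 2 ((_ : Fin d) → ℝ)).symm v)‖
        ≤ ‖Matrix.toEuclideanCLM (𝕜 := ℝ) M‖ * ‖(WithLp.equiv 2 ((_ : Fin d) → ℝ)).symm v‖ :=
          ContinuousLinearMap.le_opNorm _ _
      _ = specNorm M * Real.sqrt (v ⬝ᵥ v) := by rw [euc_norm, specNorm_eq_clm]
  rw [clm_apply] at hb
  rw [clm_apply, euc_inner, euc_norm] at h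
  refine h.trans ?_
  calc Real.sqrt (u ⬝ᵥ u) * ‖(WithLp.equiv 2 ((_ : Fin d) → ℝ)).symm (M *ᵥ v)‖
      ≤ Real.sqrt (u ⬝ᵥ u) * (specNorm M * Real.sqrt (v ⬝ᵥ v)) :=
        mul_le_mul_of_nonneg_left hb (Real.sqrt_nonneg _)
    _ = specNorm M * (Real.sqrt (u ⬝ᵥ u) * Real.sqrt (v ⬝ᵥ v)) := by ring

/-- B2, unit vector version -/
lemma dot_mulVec_le_one (M : Matrix (Fin d) (Fin d) ℝ) (u v : Fin d → ℝ)
    (hu : u ⬝ᵥ u = 1) (hv : v ⬝ᵥ v = 1) : |u ⬝ᵥ (M *ᵥ v)| ≤ specNorm M := by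
  have := dot_mulVec_le M u v
  rwa [hu, hv, Real.sqrt_one, mul_one, mul_one] at this

/-- B1 -/
lemma specNorm_le_of_dot (M : Matrix (Fin d) (Fin d) ℝ) (c : ℝ) (hc : 0 ≤ c)
    (h : ∀ v : Fin d → ℝ, (M *ᵥ v) ⬝ᵥ (M *ᵥ v) ≤ c ^ 2 * (v ⬝ᵥ v)) : specNorm M ≤ c := by
  rw [specNorm_eq_clm]
  refine ContinuousLinearMap.opNorm_le_bound _ hc fun x => ?_
  have hx : x = (WithLp.equiv 2 ((_ : Fin d) → ℝ)).symm (WithLp.equiv 2 _ x) := rfl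
  rw [hx, clm_apply, euc_norm, euc_norm]
  set v := WithLp.equiv 2 ((_ : Fin d) → ℝ) x
  calc Real.sqrt ((M *ᵥ v) ⬝ᵥ (M *ᵥ v)) ≤ Real.sqrt (c ^ 2 * (v ⬝ᵥ v)) :=
        Real.sqrt_le_sqrt (h v)
    _ = c * Real.sqrt (v ⬝ᵥ v) := by
        rw [Real.sqrt_mul (sq_nonneg c), Real.sqrt_sq hc]

/-- B5 -/
lemma mulVec_dot_le (M : Matrix (Fin d) (Fin d) ℝ) (v : Fin d → ℝ) :
    (M *ᵥ v) ⬝ᵥ (M *ᵥ v) ≤ specNorm M ^ 2 * (v ⬝ᵥ v) := by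
  set n := (M *ᵥ v) ⬝ᵥ (M *ᵥ v) with hn
  have h := dot_mulVec_le M (M *ᵥ v) v
  rw [abs_of_nonneg (dot_self_nonneg _), ← hn] at h
  have h2 : Real.sqrt n * Real.sqrt n ≤ (specNorm M * Real.sqrt (v ⬝ᵥ v)) * Real.sqrt n := by
    rw [Real.mul_self_sqrt (dot_self_nonneg _)]
    calc n ≤ specNorm M * (Real.sqrt n * Real.sqrt (v ⬝ᵥ v)) := h
      _ = (specNorm M * Real.sqrt (v ⬝ᵥ v)) * Real.sqrt n := by ring
  have h3 : Real.sqrt n ≤ specNorm M * Real.sqrt (v ⬝ᵥ v) := by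
    rcases eq_or_lt_of_le (Real.sqrt_nonneg n) with h0 | h0
    · rw [← h0]; exact mul_nonneg (norm_nonneg _) (Real.sqrt_nonneg _)
    · exact le_of_mul_le_mul_right h2 h0
  calc n = Real.sqrt n ^ 2 := by rw [Real.sq_sqrt (dot_self_nonneg _)]
    _ ≤ (specNorm M * Real.sqrt (v ⬝ᵥ v)) ^ 2 := pow_le_pow_left₀ (Real.sqrt_nonneg _) h3 2
    _ = specNorm M ^ 2 * (v ⬝ᵥ v) := by rw [mul_pow, Real.sq_sqrt (dot_self_nonneg _)]

lemma dp_mulVec_left (M : Matrix (Fin d) (Fin d) ℝ) (x y : Fin d → ℝ) :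
    (M *ᵥ x) ⬝ᵥ y = x ⬝ᵥ (Mᵀ *ᵥ y) := by
  rw [Matrix.dotProduct_mulVec, Matrix.vecMul_transpose, dotProduct_comm,
    Matrix.dotProduct_mulVec, ← Matrix.mulVec_transpose, dotProduct_comm]

lemma sumForm (P : Matrix (Fin d) (Fin d) ℝ) (w : Fin d → ℝ) (x : Fin d → ℝ) :
    x ⬝ᵥ ((P * Matrix.diagonal w * Pᵀ) *ᵥ x)
      = ∑ i, w i * ((Pᵀ *ᵥ x) i) ^ 2 := by
  rw [← Matrix.mulVec_mulVec, ← Matrix.mulVec_mulVec]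
  rw [show x ⬝ᵥ (P *ᵥ (Matrix.diagonal w *ᵥ (Pᵀ *ᵥ x)))
      = (Pᵀ *ᵥ x) ⬝ᵥ (Matrix.diagonal w *ᵥ (Pᵀ *ᵥ x)) by
    rw [dotProduct_comm, dp_mulVec_left, dotProduct_comm]]
  simp only [dotProduct, Matrix.mulVec_diagonal]
  exact Finset.sum_congr rfl fun i _ => by ring

lemma normDot (P : Matrix (Fin d) (Fin d) ℝ) (hP2 : P * Pᵀ = 1) (x y : Fin d → ℝ) :
    (Pᵀ *ᵥ x) ⬝ᵥ (Pᵀ *ᵥ y) = x ⬝ᵥ y := by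
  rw [dp_mulVec_left, Matrix.transpose_transpose, Matrix.mulVec_mulVec, hP2, Matrix.one_mulVec]

lemma sum_sq_ge (μ z : Fin d → ℝ) (θ : ℝ) (pred : Fin d → Prop) [DecidablePred pred]
    (h1 : ∀ i, pred i → θ ≤ μ i) (h2 : ∀ i, ¬ pred i → z i = 0) :
    θ * (z ⬝ᵥ z) ≤ ∑ i, μ i * (z i) ^ 2 := by
  rw [dotProduct, Finset.mul_sum]
  refine Finset.sum_le_sum fun i _ => ?_
  by_cases h : pred i
  · have := h1 i h
    nlinarith [sq_nonneg (z i)]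
  · rw [h2 i h]; ring_nf; exact le_refl 0

lemma sum_sq_le (μ z : Fin d → ℝ) (θ : ℝ) (pred : Fin d → Prop) [DecidablePred pred]
    (h1 : ∀ i, pred i → μ i ≤ θ) (h2 : ∀ i, ¬ pred i → z i = 0) :
    ∑ i, μ i * (z i) ^ 2 ≤ θ * (z ⬝ᵥ z) := by
  have := sum_sq_ge (fun i => -μ i) z (-θ) pred (fun i hi => neg_le_neg (h1 i hi)) h2
  simp only [neg_mul, Finset.sum_neg_distrib] at this
  linarith

lemma conjD_mul (P : Matrix (Fin d) (Fin d) ℝ) (hP1 : Pᵀ * P = 1) (w₁ w₂ : Fin d → ℝ) :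
    (P * Matrix.diagonal w₁ * Pᵀ) * (P * Matrix.diagonal w₂ * Pᵀ)
      = P * Matrix.diagonal (fun i => w₁ i * w₂ i) * Pᵀ := by
  have : (P * Matrix.diagonal w₁ * Pᵀ) * (P * Matrix.diagonal w₂ * Pᵀ)
      = P * (Matrix.diagonal w₁ * Matrix.diagonal w₂) * Pᵀ := by
    rw [show P * Matrix.diagonal w₁ * Pᵀ * (P * Matrix.diagonal w₂ * Pᵀ)
        = P * Matrix.diagonal w₁ * (Pᵀ * P) * Matrix.diagonal w₂ * Pᵀ by
      simp only [Matrix.mul_assoc]]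
    rw [hP1, Matrix.mul_one]
    simp only [Matrix.mul_assoc]
  rw [this, Matrix.diagonal_mul_diagonal]

lemma conj_t (P : Matrix (Fin d) (Fin d) ℝ) (w : Fin d → ℝ) :
    (P * Matrix.diagonal w * Pᵀ)ᵀ = P * Matrix.diagonal w * Pᵀ := by
  rw [Matrix.transpose_mul, Matrix.transpose_mul, Matrix.transpose_transpose,
    Matrix.diagonal_transpose, Matrix.mul_assoc]

lemma real_spectral (H : Matrix (Fin d) (Fin d) ℝ) (hH : Hᵀ = H) :
    ∃ (W : Matrix (Fin d) (Fin d) ℝ) (μ : Fin d → ℝ),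
      Wᵀ * W = 1 ∧ W * Wᵀ = 1 ∧ H = W * Matrix.diagonal μ * Wᵀ := by
  have hherm : H.IsHermitian := by rw [Matrix.IsHermitian, ct_eq_t, hH]
  refine ⟨(hherm.eigenvectorUnitary : Matrix (Fin d) (Fin d) ℝ), hherm.eigenvalues, ?_, ?_, ?_⟩
  · have := Matrix.mem_unitaryGroup_iff'.mp hherm.eigenvectorUnitary.2
    rwa [Matrix.star_eq_conjTranspose, ct_eq_t] at this
  · have := Matrix.mem_unitaryGroup_iff.mp hherm.eigenvectorUnitary.2
    rwa [Matrix.star_eq_conjTranspose, ct_eq_t] at this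
  · have := hherm.spectral_theorem
    simp only [Unitary.conjStarAlgAut_apply, Unitary.coe_star] at this
    rwa [Matrix.star_eq_conjTranspose, ct_eq_t, show RCLike.ofReal ∘ hherm.eigenvalues
      = hherm.eigenvalues by funext i; simp [RCLike.ofReal_real_eq_id]] at this

lemma col_eigen (W : Matrix (Fin d) (Fin d) ℝ) (hW1 : Wᵀ * W = 1) (μ : Fin d → ℝ) (j : Fin d) :
    (W * Matrix.diagonal μ * Wᵀ) *ᵥ (fun i => W i j) = μ j • (fun i => W i j) ∧
      (fun i => W i j) ⬝ᵥ (fun i => W i j) = 1 := by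
  constructor
  · have hcol : (fun i => W i j) = W *ᵥ Pi.single j 1 := by
      funext i; simp [Matrix.mulVec_single]
    rw [hcol, Matrix.mulVec_mulVec, show W * Matrix.diagonal μ * Wᵀ * W
        = W * Matrix.diagonal μ by rw [Matrix.mul_assoc, hW1, Matrix.mul_one],
      ← Matrix.mulVec_mulVec, Matrix.diagonal_mulVec_single, ← Matrix.mulVec_smul]
    funext i
    simp [Matrix.mulVec, dotProduct, Pi.single_apply, Pi.smul_apply, mul_ite,
      Finset.sum_ite_eq', mul_comm]
  · have : (fun i => W i j) ⬝ᵥ (fun i => W i j) = (Wᵀ * W) j j := by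
      simp [Matrix.mul_apply, dotProduct, mul_comm]
    rw [this, hW1, Matrix.one_apply_eq]

/-- Norm of a conjugated diagonal matrix is at most the max abs of entries. -/
lemma specNorm_conj_le (P : Matrix (Fin d) (Fin d) ℝ) (hP1 : Pᵀ * P = 1) (hP2 : P * Pᵀ = 1)
    (w : Fin d → ℝ) (c : ℝ) (hc : 0 ≤ c) (h : ∀ i, |w i| ≤ c) :
    specNorm (P * Matrix.diagonal w * Pᵀ) ≤ c := by
  set M := P * Matrix.diagonal w * Pᵀ with hM
  refine specNorm_le_of_dot M c hc fun v => ?_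
  have h1 : (M *ᵥ v) ⬝ᵥ (M *ᵥ v) = v ⬝ᵥ ((Mᵀ * M) *ᵥ v) := by
    rw [dp_mulVec_left, Matrix.mulVec_mulVec]
  have h2 : Mᵀ * M = P * Matrix.diagonal (fun i => w i * w i) * Pᵀ := by
    rw [hM, conj_t, conjD_mul P hP1]
  rw [h1, h2, sumForm]
  calc ∑ i, (w i * w i) * ((Pᵀ *ᵥ v) i) ^ 2
      ≤ c ^ 2 * ((Pᵀ *ᵥ v) ⬝ᵥ (Pᵀ *ᵥ v)) := by
        refine sum_sq_le _ _ _ (fun _ => True) (fun i _ => ?_) (fun i hi => absurd trivial hi)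
        have := h i
        nlinarith [abs_nonneg (w i), sq_abs (w i)]
    _ = c ^ 2 * (v ⬝ᵥ v) := by rw [normDot P hP2]

/-- existence of a top eigenvector for a symmetric matrix -/
lemma exists_top_eigen (hd : 0 < d) (H : Matrix (Fin d) (Fin d) ℝ) (hH : Hᵀ = H) :
    ∃ (v : Fin d → ℝ) (σ : ℝ), v ⬝ᵥ v = 1 ∧ H *ᵥ v = σ • v ∧ |σ| = specNorm H := by
  obtain ⟨W, μ, hW1, hW2, hspec⟩ := real_spectral H hH
  have hne : (Finset.univ : Finset (Fin d)).Nonempty := by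
    refine ⟨⟨0, hd⟩, Finset.mem_univ _⟩
  obtain ⟨j, -, hj⟩ := Finset.exists_max_image Finset.univ (fun i => |μ i|) hne
  obtain ⟨hev, hunit⟩ := col_eigen W hW1 μ j
  refine ⟨fun i => W i j, μ j, hunit, by rw [hspec]; exact hev, le_antisymm ?_ ?_⟩
  · have h1 : (fun i => W i j) ⬝ᵥ (H *ᵥ fun i => W i j) = μ j := by
      rw [hspec, hev, dotProduct_smul, hunit, smul_eq_mul, mul_one]
    have := dot_mulVec_le_one H (fun i => W i j) (fun i => W i j) hunit hunit
    rwa [h1] at this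
  · rw [hspec]
    exact specNorm_conj_le W hW1 hW2 μ (|μ j|) (abs_nonneg _) (fun i => hj i (Finset.mem_univ i))


lemma exists_singular_pair (hd : 0 < d) (X : Matrix (Fin d) (Fin d) ℝ)
    (hX : specNorm X ≠ 0) :
    ∃ u v : Fin d → ℝ, u ⬝ᵥ u = 1 ∧ v ⬝ᵥ v = 1 ∧
      X *ᵥ v = specNorm X • u ∧ Xᵀ *ᵥ u = specNorm X • v := by
  set s := specNorm X with hs
  have hspos : 0 < s := lt_of_le_of_ne (specNorm_nonneg X) (Ne.symm hX)
  have hHt : (Xᵀ * X)ᵀ = Xᵀ * X := by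
    rw [Matrix.transpose_mul, Matrix.transpose_transpose]
  obtain ⟨v, σ, hv, hev, habs⟩ := exists_top_eigen hd (Xᵀ * X) hHt
  rw [specNorm_star_self] at habs
  have hXvv : (X *ᵥ v) ⬝ᵥ (X *ᵥ v) = σ := by
    rw [dp_mulVec_left, Matrix.mulVec_mulVec, hev, dotProduct_smul, hv,
      smul_eq_mul, mul_one]
  have h0 : 0 ≤ σ := by rw [← hXvv]; exact dot_self_nonneg _
  have hσ : σ = s ^ 2 := by rw [← abs_of_nonneg h0, habs]
  refine ⟨s⁻¹ • (X *ᵥ v), v, ?_, hv, ?_, ?_⟩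
  · rw [smul_dotProduct, dotProduct_smul, hXvv, hσ, smul_eq_mul, smul_eq_mul, sq]
    field_simp
  · rw [smul_smul, mul_inv_cancel₀ (ne_of_gt hspos), one_smul]
  · rw [Matrix.mulVec_smul, Matrix.mulVec_mulVec, hev, hσ, smul_smul]
    congr 1
    rw [sq]
    field_simp

lemma dotCS (x y : Fin d → ℝ) : (x ⬝ᵥ y) ^ 2 ≤ (x ⬝ᵥ x) * (y ⬝ᵥ y) := by
  have := Finset.sum_mul_sq_le_sq_mul_sq Finset.univ x y
  simpa [dotProduct, sq] using this

lemma proj_norm_le_one (Q : Matrix (Fin d) (Fin d) ℝ) (hQt : Qᵀ = Q) (hQi : Q * Q = Q) :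
    specNorm Q ≤ 1 := by
  refine specNorm_le_of_dot Q 1 zero_le_one fun v => ?_
  have hn : (Q *ᵥ v) ⬝ᵥ (Q *ᵥ v) = v ⬝ᵥ (Q *ᵥ v) := by
    rw [dp_mulVec_left, Matrix.mulVec_mulVec, hQt, hQi]
  have hcs := dotCS v (Q *ᵥ v)
  set n := (Q *ᵥ v) ⬝ᵥ (Q *ᵥ v) with hnd
  rw [← hn] at hcs
  rcases eq_or_lt_of_le (dot_self_nonneg (Q *ᵥ v)) with h0 | h0
  · rw [← hnd] at h0
    rw [← h0, one_pow, one_mul]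
    exact dot_self_nonneg v
  · rw [← hnd] at h0
    have : n ^ 2 ≤ (v ⬝ᵥ v) * n := hcs
    rw [one_pow, one_mul]
    nlinarith

/-- Core Sylvester-type bound. -/
lemma sylvester (hd : 0 < d) (A B Q V : Matrix (Fin d) (Fin d) ℝ)
    (hQt : Qᵀ = Q) (hQi : Q * Q = Q) (hVt : Vᵀ = V) (hVi : V * V = V)
    (hAQ : A * Q = Q * A) (hBV : B * V = V * B) (α β : ℝ) (hab : α ≤ β)
    (hA : ∀ x, Q *ᵥ x = x → x ⬝ᵥ (A *ᵥ x) ≤ α * (x ⬝ᵥ x))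
    (hB : ∀ x, V *ᵥ x = x → β * (x ⬝ᵥ x) ≤ x ⬝ᵥ (B *ᵥ x)) :
    (β - α) * specNorm (Q * V) ≤ specNorm (Q * (A - B) * V) := by
  by_cases hX : specNorm (Q * V) = 0
  · rw [hX, mul_zero]; exact specNorm_nonneg _
  set X := Q * V with hXdef
  set s := specNorm X with hs
  have hspos : 0 < s := lt_of_le_of_ne (specNorm_nonneg X) (Ne.symm hX)
  obtain ⟨u, v, hu, hv, huv, hvu⟩ := exists_singular_pair hd X hX
  have hXt : Xᵀ = V * Q := by rw [hXdef, Matrix.transpose_mul, hQt, hVt]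
  have hQu : Q *ᵥ u = u := by
    have h1 : Q *ᵥ (X *ᵥ v) = X *ᵥ v := by
      rw [Matrix.mulVec_mulVec, show Q * X = X by
        rw [hXdef, ← Matrix.mul_assoc, hQi]]
    rw [huv, Matrix.mulVec_smul] at h1
    exact smul_right_injective _ (ne_of_gt hspos) h1
  have hVv : V *ᵥ v = v := by
    have h1 : V *ᵥ (Xᵀ *ᵥ u) = Xᵀ *ᵥ u := by
      rw [Matrix.mulVec_mulVec, show V * Xᵀ = Xᵀ by
        rw [hXt, ← Matrix.mul_assoc, hVi]]
    rw [hvu, Matrix.mulVec_smul] at h1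
    exact smul_right_injective _ (ne_of_gt hspos) h1
  have hM : Q * (A - B) * V = A * X - X * B := by
    rw [Matrix.mul_sub, Matrix.sub_mul, hXdef]
    congr 1
    · rw [← Matrix.mul_assoc, hAQ, Matrix.mul_assoc]
    · rw [Matrix.mul_assoc, hBV, ← Matrix.mul_assoc]
  have key : u ⬝ᵥ ((Q * (A - B) * V) *ᵥ v) = s * (u ⬝ᵥ (A *ᵥ u)) - s * (v ⬝ᵥ (B *ᵥ v)) := by
    rw [hM, Matrix.sub_mulVec, dotProduct_sub]
    congr 1
    · rw [← Matrix.mulVec_mulVec, huv, Matrix.mulVec_smul, dotProduct_smul, smul_eq_mul]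
    · rw [← Matrix.mulVec_mulVec, show u ⬝ᵥ (X *ᵥ (B *ᵥ v)) = (Xᵀ *ᵥ u) ⬝ᵥ (B *ᵥ v) by
        rw [dp_mulVec_left, Matrix.transpose_transpose], hvu, smul_dotProduct,
        smul_eq_mul]
  have hAu := hA u hQu
  have hBv := hB v hVv
  rw [hu] at hAu
  rw [hv] at hBv
  rw [mul_one] at hAu hBv
  have hle : u ⬝ᵥ ((Q * (A - B) * V) *ᵥ v) ≤ s * α - s * β := by
    rw [key]
    have h1 : s * (u ⬝ᵥ (A *ᵥ u)) ≤ s * α := by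
      exact mul_le_mul_of_nonneg_left hAu (le_of_lt hspos)
    have h2 : s * β ≤ s * (v ⬝ᵥ (B *ᵥ v)) := by
      exact mul_le_mul_of_nonneg_left hBv (le_of_lt hspos)
    linarith
  have habs := dot_mulVec_le_one (Q * (A - B) * V) u v hu hv
  have : (β - α) * s ≤ -(u ⬝ᵥ ((Q * (A - B) * V) *ᵥ v)) := by nlinarith
  calc (β - α) * s ≤ -(u ⬝ᵥ ((Q * (A - B) * V) *ᵥ v)) := this
    _ ≤ |u ⬝ᵥ ((Q * (A - B) * V) *ᵥ v)| := neg_le_abs _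
    _ ≤ specNorm (Q * (A - B) * V) := habs


lemma dot_self_pos (c : Fin d → ℝ) (hc : c ≠ 0) : 0 < c ⬝ᵥ c := by
  rcases eq_or_lt_of_le (dot_self_nonneg c) with h0 | h0
  · exfalso
    apply hc
    funext i
    have hle : c i * c i ≤ 0 := by
      have : ∀ j ∈ Finset.univ, j ≠ i → (0:ℝ) ≤ c j * c j := fun j _ _ => mul_self_nonneg _
      have hsum : (0:ℝ) = ∑ j, c j * c j := h0
      by_contra hpos
      push_neg at hpos
      have : (0:ℝ) < ∑ j, c j * c j :=
        Finset.sum_pos' (fun j _ => mul_self_nonneg _) ⟨i, Finset.mem_univ i, hpos⟩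
      rw [← hsum] at this
      exact lt_irrefl 0 this
    have := mul_self_nonneg (c i)
    have h2 : c i * c i = 0 := le_antisymm hle this
    exact mul_self_eq_zero.mp h2
  · exact h0

/-- Weyl-type perturbation bound. -/
lemma weyl (P Ph : Matrix (Fin d) (Fin d) ℝ) (lam lamh : Fin d → ℝ)
    (hP1 : Pᵀ * P = 1) (hP2 : P * Pᵀ = 1) (hPh1 : Phᵀ * Ph = 1)
    (hlam : Antitone lam) (hlamh : Antitone lamh) (m : Fin d) :
    lamh m ≤ lam m + specNorm (P * Matrix.diagonal lam * Pᵀ - Ph * Matrix.diagonal lamh * Phᵀ) := by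
  set A := P * Matrix.diagonal lam * Pᵀ with hA
  set Ah := Ph * Matrix.diagonal lamh * Phᵀ with hAh
  set ε := specNorm (A - Ah) with he
  set G : Matrix (Fin d) (Fin d) ℝ := Matrix.of fun i j =>
    if (i : ℕ) < (m : ℕ) then (Pᵀ * Ph) i j
    else if i = m then 0 else (1 : Matrix (Fin d) (Fin d) ℝ) i j with hG
  have hdet : G.det = 0 := by
    apply Matrix.det_eq_zero_of_row_eq_zero m
    intro j
    simp only [hG, Matrix.of_apply, lt_irrefl, if_false, if_pos rfl, if_true]
  obtain ⟨c, hc0, hGc⟩ := (Matrix.exists_mulVec_eq_zero_iff).mpr hdet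
  -- facts about c
  have hclow : ∀ i : Fin d, (m : ℕ) < (i : ℕ) → c i = 0 := by
    intro i hi
    have h := congrFun hGc i
    have hni : ¬ ((i : ℕ) < (m : ℕ)) := by omega
    have hne : i ≠ m := by
      intro h'; rw [h'] at hi; omega
    have : (G *ᵥ c) i = c i := by
      simp only [Matrix.mulVec, dotProduct, hG, Matrix.of_apply, hni, if_false, hne,
        Matrix.one_apply, ite_mul, one_mul, zero_mul, Finset.sum_ite_eq, Finset.mem_univ, if_true]
    rw [this] at h
    exact h
  have hchigh : ∀ i : Fin d, (i : ℕ) < (m : ℕ) → ((Pᵀ * Ph) *ᵥ c) i = 0 := by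
    intro i hi
    have h := congrFun hGc i
    have : (G *ᵥ c) i = ((Pᵀ * Ph) *ᵥ c) i := by
      simp only [Matrix.mulVec, dotProduct, hG, Matrix.of_apply, hi, if_true]
    rw [this] at h
    exact h
  set w := Ph *ᵥ c with hw
  have hPhw : Phᵀ *ᵥ w = c := by
    rw [hw, Matrix.mulVec_mulVec, hPh1, Matrix.one_mulVec]
  have hPw : Pᵀ *ᵥ w = (Pᵀ * Ph) *ᵥ c := by
    rw [hw, Matrix.mulVec_mulVec]
  have hww : w ⬝ᵥ w = c ⬝ᵥ c := by
    rw [hw, dp_mulVec_left, Matrix.mulVec_mulVec, hPh1, Matrix.one_mulVec]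
  have hwpos : 0 < w ⬝ᵥ w := by rw [hww]; exact dot_self_pos c hc0
  -- quadratic forms
  have qAh : lamh m * (w ⬝ᵥ w) ≤ w ⬝ᵥ (Ah *ᵥ w) := by
    rw [hAh, sumForm, hPhw, hww]
    refine sum_sq_ge lamh c (lamh m) (fun i => i ≤ m) (fun i hi => hlamh hi) ?_
    intro i hi
    exact hclow i (by
      rcases lt_or_ge (m : ℕ) (i : ℕ) with h | h
      · exact h
      · exact absurd (Fin.le_def.mpr h) hi)
  have qA : w ⬝ᵥ (A *ᵥ w) ≤ lam m * (w ⬝ᵥ w) := by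
    rw [hA, sumForm]
    have : (Pᵀ *ᵥ w) ⬝ᵥ (Pᵀ *ᵥ w) = w ⬝ᵥ w := normDot P hP2 w w
    rw [← this]
    refine sum_sq_le lam (Pᵀ *ᵥ w) (lam m) (fun i => m ≤ i) (fun i hi => hlam hi) ?_
    intro i hi
    rw [hPw]
    exact hchigh i (by
      rcases lt_or_ge (i : ℕ) (m : ℕ) with h | h
      · exact h
      · exact absurd (Fin.le_def.mpr h) hi)
  -- perturbation
  have hpert : |w ⬝ᵥ ((A - Ah) *ᵥ w)| ≤ ε * (w ⬝ᵥ w) := by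
    have := dot_mulVec_le (A - Ah) w w
    rwa [Real.mul_self_sqrt (dot_self_nonneg w)] at this
  have hsplit : w ⬝ᵥ (Ah *ᵥ w) = w ⬝ᵥ (A *ᵥ w) - w ⬝ᵥ ((A - Ah) *ᵥ w) := by
    rw [Matrix.sub_mulVec, dotProduct_sub]
    ring
  have hlow : -(ε * (w ⬝ᵥ w)) ≤ w ⬝ᵥ ((A - Ah) *ᵥ w) := neg_le_of_abs_le hpert
  have : lamh m * (w ⬝ᵥ w) ≤ (lam m + ε) * (w ⬝ᵥ w) := by
    calc lamh m * (w ⬝ᵥ w) ≤ w ⬝ᵥ (Ah *ᵥ w) := qAh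
      _ = w ⬝ᵥ (A *ᵥ w) - w ⬝ᵥ ((A - Ah) *ᵥ w) := hsplit
      _ ≤ lam m * (w ⬝ᵥ w) + ε * (w ⬝ᵥ w) := by linarith
      _ = (lam m + ε) * (w ⬝ᵥ w) := by ring
  exact le_of_mul_le_mul_right (by linarith [this]) hwpos


lemma sandwich_le (Q M V : Matrix (Fin d) (Fin d) ℝ) (hQ : specNorm Q ≤ 1)
    (hV : specNorm V ≤ 1) : specNorm (Q * M * V) ≤ specNorm M := by
  calc specNorm (Q * M * V) ≤ specNorm (Q * M) * specNorm V := specNorm_mul_le _ _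
    _ ≤ specNorm (Q * M) * 1 :=
        mul_le_mul_of_nonneg_left hV (specNorm_nonneg _)
    _ = specNorm (Q * M) := mul_one _
    _ ≤ specNorm Q * specNorm M := specNorm_mul_le _ _
    _ ≤ 1 * specNorm M := mul_le_mul_of_nonneg_right hQ (specNorm_nonneg _)
    _ = specNorm M := one_mul _

lemma proj_diff_le (U V : Matrix (Fin d) (Fin d) ℝ)
    (hUt : Uᵀ = U) (hUi : U * U = U) (hVt : Vᵀ = V) (hVi : V * V = V) :
    specNorm (U - V) ≤ max (specNorm (U * (1 - V))) (specNorm ((1 - U) * V)) := by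
  set a := specNorm (U * (1 - V)) with hadef
  set b := specNorm ((1 - U) * V) with hbdef
  have hmax0 : 0 ≤ max a b := le_trans (specNorm_nonneg _) (le_max_left a b)
  refine specNorm_le_of_dot _ _ hmax0 fun x => ?_
  set p := (U * (1 - V)) *ᵥ x with hp
  set q := ((1 - U) * V) *ᵥ x with hq
  have hsplit : (U - V) *ᵥ x = p - q := by
    rw [hp, hq, ← Matrix.sub_mulVec]
    congr 1
    noncomm_ring
  have hcross : p ⬝ᵥ q = 0 := by
    rw [hp, hq, dp_mulVec_left, Matrix.mulVec_mulVec]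
    have : (U * (1 - V))ᵀ * ((1 - U) * V) = 0 := by
      have ht : (U * (1 - V))ᵀ = (1 - V) * U := by
        rw [Matrix.transpose_mul, Matrix.transpose_sub, Matrix.transpose_one, hVt, hUt]
      rw [ht]
      have : (1 - V) * U * ((1 - U) * V) = (1 - V) * (U * (1 - U)) * V := by noncomm_ring
      rw [this, show U * (1 - U) = 0 by rw [Matrix.mul_sub, Matrix.mul_one, hUi, sub_self]]
      noncomm_ring
    rw [this, Matrix.zero_mulVec, dotProduct_zero]
  set r := V *ᵥ x with hr
  set t := (1 - V) *ᵥ x with ht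
  have hxrt : x = r + t := by
    rw [hr, ht, ← Matrix.add_mulVec]
    rw [show V + (1 - V) = 1 by noncomm_ring, Matrix.one_mulVec]
  have hrt : r ⬝ᵥ t = 0 := by
    rw [hr, ht, dp_mulVec_left, Matrix.mulVec_mulVec]
    have : Vᵀ * (1 - V) = 0 := by
      rw [hVt, Matrix.mul_sub, Matrix.mul_one, hVi, sub_self]
    rw [this, Matrix.zero_mulVec, dotProduct_zero]
  have hpyth : x ⬝ᵥ x = r ⬝ᵥ r + t ⬝ᵥ t := by
    rw [hxrt, add_dotProduct, dotProduct_add, dotProduct_add]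
    rw [dotProduct_comm t r] at *
    linarith [hrt]
  have hpt : p = (U * (1 - V)) *ᵥ t := by
    rw [hp, ht, Matrix.mulVec_mulVec]
    congr 1
    have h11 : (1 - V) * (1 - V) = 1 - V := by
      rw [Matrix.sub_mul, Matrix.one_mul, Matrix.mul_sub, Matrix.mul_one, hVi, sub_self, sub_zero]
    rw [Matrix.mul_assoc, h11]
  have hqr : q = ((1 - U) * V) *ᵥ r := by
    rw [hq, hr, Matrix.mulVec_mulVec]
    congr 1
    rw [Matrix.mul_assoc, hVi]
  have hpp : p ⬝ᵥ p ≤ a ^ 2 * (t ⬝ᵥ t) := by rw [hpt]; exact mulVec_dot_le _ _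
  have hqq : q ⬝ᵥ q ≤ b ^ 2 * (r ⬝ᵥ r) := by rw [hqr]; exact mulVec_dot_le _ _
  have hDx : ((U - V) *ᵥ x) ⬝ᵥ ((U - V) *ᵥ x) = p ⬝ᵥ p + q ⬝ᵥ q := by
    rw [hsplit, sub_dotProduct, dotProduct_sub, dotProduct_sub,
      dotProduct_comm q p, hcross]
    ring
  rw [hDx, hpyth]
  have ha2 : a ^ 2 ≤ (max a b) ^ 2 :=
    pow_le_pow_left₀ (specNorm_nonneg _) (le_max_left a b) 2
  have hb2 : b ^ 2 ≤ (max a b) ^ 2 :=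
    pow_le_pow_left₀ (specNorm_nonneg _) (le_max_right a b) 2
  nlinarith [dot_self_nonneg t, dot_self_nonneg r]

lemma conj_sub_one (P : Matrix (Fin d) (Fin d) ℝ) (hP2 : P * Pᵀ = 1) (w : Fin d → ℝ) :
    1 - P * Matrix.diagonal w * Pᵀ = P * Matrix.diagonal (fun i => 1 - w i) * Pᵀ := by
  have h1 : (1 : Matrix (Fin d) (Fin d) ℝ) = P * Matrix.diagonal (fun _ => (1:ℝ)) * Pᵀ := by
    rw [show Matrix.diagonal (fun _ => (1:ℝ)) = (1 : Matrix (Fin d) (Fin d) ℝ) from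
      Matrix.diagonal_one, Matrix.mul_one, hP2]
  rw [h1, show Matrix.diagonal (fun i => 1 - w i)
      = Matrix.diagonal (fun _ => (1:ℝ)) - Matrix.diagonal w from by
    rw [Matrix.diagonal_sub], Matrix.mul_sub, Matrix.sub_mul]

lemma qf_proj_le (P : Matrix (Fin d) (Fin d) ℝ) (hP1 : Pᵀ * P = 1) (hP2 : P * Pᵀ = 1)
    (lam w : Fin d → ℝ) (θ : ℝ) (hcond : ∀ i, w i ≠ 0 → lam i ≤ θ) :
    ∀ x, (P * Matrix.diagonal w * Pᵀ) *ᵥ x = x →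
      x ⬝ᵥ ((P * Matrix.diagonal lam * Pᵀ) *ᵥ x) ≤ θ * (x ⬝ᵥ x) := by
  intro x hx
  have hz : Matrix.diagonal w *ᵥ (Pᵀ *ᵥ x) = Pᵀ *ᵥ x := by
    have := congrArg (fun y => Pᵀ *ᵥ y) hx
    rwa [Matrix.mulVec_mulVec, show Pᵀ * (P * Matrix.diagonal w * Pᵀ)
      = Matrix.diagonal w * Pᵀ from by
        rw [← Matrix.mul_assoc, ← Matrix.mul_assoc, hP1, Matrix.one_mul],
      ← Matrix.mulVec_mulVec] at this
  have hzero : ∀ i, w i = 0 → (Pᵀ *ᵥ x) i = 0 := by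
    intro i hi
    have := congrFun hz i
    rw [Matrix.mulVec_diagonal, hi, zero_mul] at this
    exact this.symm
  rw [sumForm, show x ⬝ᵥ x = (Pᵀ *ᵥ x) ⬝ᵥ (Pᵀ *ᵥ x) from (normDot P hP2 x x).symm]
  exact sum_sq_le lam (Pᵀ *ᵥ x) θ (fun i => w i ≠ 0) hcond
    (fun i hi => hzero i (not_not.mp hi))

lemma qf_proj_ge (P : Matrix (Fin d) (Fin d) ℝ) (hP1 : Pᵀ * P = 1) (hP2 : P * Pᵀ = 1)
    (lam w : Fin d → ℝ) (θ : ℝ) (hcond : ∀ i, w i ≠ 0 → θ ≤ lam i) :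
    ∀ x, (P * Matrix.diagonal w * Pᵀ) *ᵥ x = x →
      θ * (x ⬝ᵥ x) ≤ x ⬝ᵥ ((P * Matrix.diagonal lam * Pᵀ) *ᵥ x) := by
  intro x hx
  have h := qf_proj_le P hP1 hP2 (fun i => - lam i) w (-θ)
    (fun i hi => neg_le_neg (hcond i hi)) x hx
  have hneg : P * Matrix.diagonal (fun i => - lam i) * Pᵀ
      = -(P * Matrix.diagonal lam * Pᵀ) := by
    rw [show Matrix.diagonal (fun i => - lam i) = -(Matrix.diagonal lam) from by
      rw [Matrix.diagonal_neg], Matrix.mul_neg, Matrix.neg_mul]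
  rw [hneg, Matrix.neg_mulVec, dotProduct_neg, neg_mul] at h
  linarith

lemma submatrix_prod (P : Matrix (Fin d) (Fin d) ℝ) {k : ℕ} (hkd : k ≤ d) :
    (P.submatrix id (Fin.castLE hkd)) * (P.submatrix id (Fin.castLE hkd))ᵀ
      = P * Matrix.diagonal (fun i : Fin d => if (i : ℕ) < k then (1:ℝ) else 0) * Pᵀ := by
  ext i j
  rw [Matrix.mul_apply, Matrix.mul_apply]
  simp only [Matrix.mul_diagonal, Matrix.transpose_apply, Matrix.submatrix_apply, id_eq]
  have hstep : ∑ t : Fin d, (P i t * if (t : ℕ) < k then (1:ℝ) else 0) * P j t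
      = ∑ t : Fin d, (if (t : ℕ) < k then P i t * P j t else 0) := by
    refine Finset.sum_congr rfl fun t _ => ?_
    split <;> ring
  rw [hstep, ← Finset.sum_filter]
  refine Finset.sum_bij' (fun (s : Fin k) _ => Fin.castLE hkd s)
    (fun (t : Fin d) ht => (⟨(t : ℕ), (Finset.mem_filter.mp ht).2⟩ : Fin k))
    (fun s _ => Finset.mem_filter.mpr ⟨Finset.mem_univ _, s.isLt⟩)
    (fun t _ => Finset.mem_univ _)
    (fun s _ => by apply Fin.ext; rfl)
    (fun t _ => by apply Fin.ext; rfl)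
    (fun s _ => rfl)

end DKaux

open DKaux

/-- Variant of the Davis–Kahan `sin θ` theorem. Let `A, Â` be symmetric `d×d`
real matrices with eigendecompositions `A = P diag(λ) Pᵀ` and `Â = P̂ diag(λ̂) P̂ᵀ`, where
`P, P̂` are orthogonal and `λ, λ̂` are listed in nonincreasing order (so `λ` enumerates the
eigenvalues of `A` from largest to smallest). Suppose `0 < k < d` and `λ_k > λ_{k+1}`
(with 1-based indexing, i.e. `lam ⟨k-1⟩ > lam ⟨k⟩` in 0-based indexing). The subspaces
spanned by the top-`k` eigenvectors of `A` and `Â` are the column spans of the first `k`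
columns `U₁` of `P` and `Û₁` of `P̂`; the sine of the maximum principal angle `θ` between
them is `‖U₁U₁ᵀ − Û₁Û₁ᵀ‖`. Then `sin θ ≤ 2‖A − Â‖ / (λ_k − λ_{k+1})`. -/
theorem stmt1 {d k : ℕ} (hk : 0 < k) (hkd : k < d)
    (A Ah P Ph : Matrix (Fin d) (Fin d) ℝ) (lam lamh : Fin d → ℝ)
    (hP : P ∈ Matrix.orthogonalGroup (Fin d) ℝ)
    (hPh : Ph ∈ Matrix.orthogonalGroup (Fin d) ℝ)
    (hlam : Antitone lam) (hlamh : Antitone lamh)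
    (hA : A = P * Matrix.diagonal lam * Pᵀ)
    (hAh : Ah = Ph * Matrix.diagonal lamh * Phᵀ)
    (hgap : lam ⟨k, hkd⟩ < lam ⟨k - 1, by omega⟩) :
    specNorm ((P.submatrix id (Fin.castLE hkd.le)) * (P.submatrix id (Fin.castLE hkd.le))ᵀ
        - (Ph.submatrix id (Fin.castLE hkd.le)) * (Ph.submatrix id (Fin.castLE hkd.le))ᵀ)
      ≤ 2 * specNorm (A - Ah) / (lam ⟨k - 1, by omega⟩ - lam ⟨k, hkd⟩) := by
  have hd : 0 < d := by omega
  -- orthogonality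
  have hP1 : Pᵀ * P = 1 := by
    have := (Matrix.mem_orthogonalGroup_iff' (Fin d) ℝ).mp hP
    exact this
  have hP2 : P * Pᵀ = 1 := by
    have := (Matrix.mem_orthogonalGroup_iff (Fin d) ℝ).mp hP
    exact this
  have hPh1 : Phᵀ * Ph = 1 := by
    have := (Matrix.mem_orthogonalGroup_iff' (Fin d) ℝ).mp hPh
    exact this
  have hPh2 : Ph * Phᵀ = 1 := by
    have := (Matrix.mem_orthogonalGroup_iff (Fin d) ℝ).mp hPh
    exact this
  set jv : Fin d → ℝ := fun i => if (i : ℕ) < k then (1:ℝ) else 0 with hjv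
  set U : Matrix (Fin d) (Fin d) ℝ := P * Matrix.diagonal jv * Pᵀ with hU
  set V : Matrix (Fin d) (Fin d) ℝ := Ph * Matrix.diagonal jv * Phᵀ with hV
  rw [submatrix_prod P hkd.le, submatrix_prod Ph hkd.le, ← hjv, ← hU, ← hV]
  set a : Fin d := ⟨k - 1, by omega⟩ with ha
  set b : Fin d := ⟨k, hkd⟩ with hb
  set ε : ℝ := specNorm (A - Ah) with he
  set g : ℝ := lam a - lam b with hg
  have hgpos : (0:ℝ) < g := by rw [hg]; linarith [hgap]
  have heps : 0 ≤ ε := specNorm_nonneg _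
  -- jv is 0/1 valued, squared
  have hjvsq : (fun i => jv i * jv i) = jv := by
    funext i; rw [hjv]; dsimp only; split <;> ring
  have hjvsq' : (fun i => (1 - jv i) * (1 - jv i)) = fun i => 1 - jv i := by
    funext i; rw [hjv]; dsimp only; split <;> ring
  -- projections
  have hUt : Uᵀ = U := conj_t P jv
  have hVt : Vᵀ = V := conj_t Ph jv
  have hUi : U * U = U := by rw [hU, conjD_mul P hP1, hjvsq]
  have hVi : V * V = V := by rw [hV, conjD_mul Ph hPh1, hjvsq]
  have hQU : 1 - U = P * Matrix.diagonal (fun i => 1 - jv i) * Pᵀ := conj_sub_one P hP2 jv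
  have hQV : 1 - V = Ph * Matrix.diagonal (fun i => 1 - jv i) * Phᵀ := conj_sub_one Ph hPh2 jv
  have hQUt : (1 - U)ᵀ = 1 - U := by rw [Matrix.transpose_sub, Matrix.transpose_one, hUt]
  have hQVt : (1 - V)ᵀ = 1 - V := by rw [Matrix.transpose_sub, Matrix.transpose_one, hVt]
  have hQUi : (1 - U) * (1 - U) = 1 - U := by rw [hQU, conjD_mul P hP1, hjvsq']
  have hQVi : (1 - V) * (1 - V) = 1 - V := by rw [hQV, conjD_mul Ph hPh1, hjvsq']
  -- norms of projections
  have hnU : specNorm U ≤ 1 := proj_norm_le_one U hUt hUi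
  have hnV : specNorm V ≤ 1 := proj_norm_le_one V hVt hVi
  have hnQU : specNorm (1 - U) ≤ 1 := proj_norm_le_one _ hQUt hQUi
  have hnQV : specNorm (1 - V) ≤ 1 := proj_norm_le_one _ hQVt hQVi
  -- commutation
  have hAQU : A * (1 - U) = (1 - U) * A := by
    rw [hA, hQU, conjD_mul P hP1, conjD_mul P hP1,
      show (fun i => lam i * (1 - jv i)) = fun i => (1 - jv i) * lam i from by funext i; ring]
  have hAU : A * U = U * A := by
    rw [hA, hU, conjD_mul P hP1, conjD_mul P hP1,
      show (fun i => lam i * jv i) = fun i => jv i * lam i from by funext i; ring]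
  have hAhV : Ah * V = V * Ah := by
    rw [hAh, hV, conjD_mul Ph hPh1, conjD_mul Ph hPh1,
      show (fun i => lamh i * jv i) = fun i => jv i * lamh i from by funext i; ring]
  have hAhQV : Ah * (1 - V) = (1 - V) * Ah := by
    rw [hAh, hQV, conjD_mul Ph hPh1, conjD_mul Ph hPh1,
      show (fun i => lamh i * (1 - jv i)) = fun i => (1 - jv i) * lamh i from by
        funext i; ring]
  -- index facts
  have haval : (a : ℕ) = k - 1 := rfl
  have hbval : (b : ℕ) = k := rfl
  -- quadratic form bounds
  have hqA_low : ∀ x, (1 - U) *ᵥ x = x → x ⬝ᵥ (A *ᵥ x) ≤ lam b * (x ⬝ᵥ x) := by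
    intro x hx
    rw [hA]
    refine qf_proj_le P hP1 hP2 lam (fun i => 1 - jv i) (lam b) ?_ x (by rw [← hQU]; exact hx)
    intro i hi
    have hik : ¬ ((i : ℕ) < k) := by
      intro hik
      apply hi
      rw [hjv]; dsimp only; rw [if_pos hik]; ring
    exact hlam (by rw [Fin.le_def, hbval]; omega)
  have hqA_high : ∀ x, U *ᵥ x = x → lam a * (x ⬝ᵥ x) ≤ x ⬝ᵥ (A *ᵥ x) := by
    intro x hx
    rw [hA]
    refine qf_proj_ge P hP1 hP2 lam jv (lam a) ?_ x (by rw [← hU]; exact hx)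
    intro i hi
    have hik : (i : ℕ) < k := by
      by_contra hik
      apply hi
      rw [hjv]; dsimp only; rw [if_neg hik]
    exact hlam (by rw [Fin.le_def, haval]; omega)
  have hqAh_low : ∀ x, (1 - V) *ᵥ x = x → x ⬝ᵥ (Ah *ᵥ x) ≤ lamh b * (x ⬝ᵥ x) := by
    intro x hx
    rw [hAh]
    refine qf_proj_le Ph hPh1 hPh2 lamh (fun i => 1 - jv i) (lamh b) ?_ x
      (by rw [← hQV]; exact hx)
    intro i hi
    have hik : ¬ ((i : ℕ) < k) := by
      intro hik
      apply hi
      rw [hjv]; dsimp only; rw [if_pos hik]; ring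
    exact hlamh (by rw [Fin.le_def, hbval]; omega)
  have hqAh_high : ∀ x, V *ᵥ x = x → lamh a * (x ⬝ᵥ x) ≤ x ⬝ᵥ (Ah *ᵥ x) := by
    intro x hx
    rw [hAh]
    refine qf_proj_ge Ph hPh1 hPh2 lamh jv (lamh a) ?_ x (by rw [← hV]; exact hx)
    intro i hi
    have hik : (i : ℕ) < k := by
      by_contra hik
      apply hi
      rw [hjv]; dsimp only; rw [if_neg hik]
    exact hlamh (by rw [Fin.le_def, haval]; omega)
  -- Weyl bounds
  have w1 : lam a ≤ lamh a + ε := by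
    have := weyl Ph P lamh lam hPh1 hPh2 hP1 hlamh hlam a
    rw [← hAh, ← hA] at this
    rwa [show specNorm (Ah - A) = ε from by rw [he, ← specNorm_neg, neg_sub]] at this
  have w2 : lamh b ≤ lam b + ε := by
    have := weyl P Ph lam lamh hP1 hP2 hPh1 hlam hlamh b
    rwa [← hA, ← hAh, ← he] at this
  -- decomposition
  have hdecomp : specNorm (U - V)
      ≤ max (specNorm (U * (1 - V))) (specNorm ((1 - U) * V)) :=
    proj_diff_le U V hUt hUi hVt hVi
  have htrans : specNorm (U * (1 - V)) = specNorm ((1 - V) * U) := by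
    rw [← specNorm_transpose (U * (1 - V)), Matrix.transpose_mul, hQVt, hUt]
  set s1 : ℝ := specNorm ((1 - V) * U) with hs1
  set s2 : ℝ := specNorm ((1 - U) * V) with hs2
  have hs1nn : 0 ≤ s1 := specNorm_nonneg _
  have hs2nn : 0 ≤ s2 := specNorm_nonneg _
  have hs1le1 : s1 ≤ 1 := by
    calc s1 ≤ specNorm (1 - V) * specNorm U := specNorm_mul_le _ _
      _ ≤ 1 := mul_le_one₀ hnQV (specNorm_nonneg _) hnU
  have hs2le1 : s2 ≤ 1 := by
    calc s2 ≤ specNorm (1 - U) * specNorm V := specNorm_mul_le _ _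
      _ ≤ 1 := mul_le_one₀ hnQU (specNorm_nonneg _) hnV
  have hDle : specNorm (U - V) ≤ max s1 s2 := by
    rw [htrans] at hdecomp
    exact hdecomp
  -- case split
  rcases le_or_gt g (2 * ε) with hce | hce
  · -- trivial case
    have h1 : (1:ℝ) ≤ 2 * ε / g := (one_le_div hgpos).mpr hce
    calc specNorm (U - V) ≤ max s1 s2 := hDle
      _ ≤ 1 := max_le hs1le1 hs2le1
      _ ≤ 2 * ε / g := h1
  · -- Davis–Kahan case
    have hεg : ε < g / 2 := by linarith
    -- Sylvester bound for s2
    have hab1 : lam b ≤ lamh a := by linarith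
    have syl2 : (lamh a - lam b) * s2 ≤ ε := by
      have h := sylvester hd A Ah (1 - U) V hQUt hQUi hVt hVi hAQU hAhV
        (lam b) (lamh a) hab1 hqA_low hqAh_high
      calc (lamh a - lam b) * s2 ≤ specNorm ((1 - U) * (A - Ah) * V) := h
        _ ≤ specNorm (A - Ah) := sandwich_le _ _ _ hnQU hnV
        _ = ε := by rw [he]
    have hab2 : lamh b ≤ lam a := by linarith
    have syl1 : (lam a - lamh b) * s1 ≤ ε := by
      have h := sylvester hd Ah A (1 - V) U hQVt hQVi hUt hUi hAhQV hAU
        (lamh b) (lam a) hab2 hqAh_low hqA_high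
      calc (lam a - lamh b) * s1 ≤ specNorm ((1 - V) * (Ah - A) * U) := h
        _ ≤ specNorm (Ah - A) := sandwich_le _ _ _ hnQV hnU
        _ = ε := by rw [he, ← specNorm_neg, neg_sub]
    have hb1 : s1 ≤ 2 * ε / g := by
      rw [le_div_iff₀ hgpos]
      nlinarith
    have hb2 : s2 ≤ 2 * ε / g := by
      rw [le_div_iff₀ hgpos]
      nlinarith
    calc specNorm (U - V) ≤ max s1 s2 := hDle
      _ ≤ 2 * ε / g := max_le hb1 hb2
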